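/- arXiv:1109.5241 — 2 statements merged into one kernel-verified Lean document; each statement's English description precedes it below -/
import Mathlib

section
/- Let ψ : ℝ^d → ℝ be a C² function, let λ > 1, let U ⊆ ℝ^d be an open convex set, and let p ∈ ℝ^d be such that for all u ∈ U and all v ∈ ℝ^d: (1/λ)·vᵀψ″(u)v ≤ vᵀψ″(p)v ≤ λ·vᵀψ″(u)v, where ψ″ denotes the Hessian matrix of ψ. Then for all x, y ∈ U: (1/(2λ))·(x−y)ᵀψ″(p)(x−y) ≤ D_ψ(x;y) ≤ (λ/2)·(x−y)ᵀψ″(p)(x−y). -/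
/-- The Hessian matrix of `ψ : ℝ^d → ℝ` at the point `x`. -/
noncomputable def hess {d : ℕ} (ψ : EuclideanSpace ℝ (Fin d) → ℝ)
    (x : EuclideanSpace ℝ (Fin d)) : Matrix (Fin d) (Fin d) ℝ :=
  Matrix.of fun i j =>
    iteratedFDeriv ℝ 2 ψ x ![EuclideanSpace.single i 1, EuclideanSpace.single j 1]

/-- The quadratic form `v ↦ vᵀ M v` on `ℝ^d` associated to a matrix `M`. -/
noncomputable def quadForm {d : ℕ} (M : Matrix (Fin d) (Fin d) ℝ)
    (v : EuclideanSpace ℝ (Fin d)) : ℝ :=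
  ∑ i, ∑ j, v i * M i j * v j

/-- The Bregman distance `D_ψ(x;y) = ψ(x) − ψ(y) − ∇ψ(y)ᵀ(x−y)`. -/
noncomputable def breg {d : ℕ} (ψ : EuclideanSpace ℝ (Fin d) → ℝ)
    (x y : EuclideanSpace ℝ (Fin d)) : ℝ :=
  ψ x - ψ y - inner ℝ (gradient ψ y) (x - y)

lemma quadForm_hess_eq {d : ℕ} (ψ : EuclideanSpace ℝ (Fin d) → ℝ)
    (u v : EuclideanSpace ℝ (Fin d)) :
    quadForm (hess ψ u) v = fderiv ℝ (fderiv ℝ ψ) u v v := by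
  set B := fderiv ℝ (fderiv ℝ ψ) u with hB
  have hrep : v = ∑ i, v i • EuclideanSpace.single i (1:ℝ) := by
    ext j
    rw [show (∑ i, v i • EuclideanSpace.single i (1:ℝ)) j
        = ∑ i, (v i • EuclideanSpace.single i (1:ℝ)) j from by rw [WithLp.ofLp_sum, Finset.sum_apply]]
    simp [EuclideanSpace.single_apply]
  have : B v v = ∑ i, ∑ j, v i * (v j * B (EuclideanSpace.single i 1) (EuclideanSpace.single j 1)) := by
    conv_lhs => rw [hrep]
    simp only [map_sum, map_smul, ContinuousLinearMap.coe_sum', Finset.sum_apply,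
      ContinuousLinearMap.smul_apply, smul_eq_mul, Finset.mul_sum]
    rw [Finset.sum_comm]
    exact Finset.sum_congr rfl fun i _ => Finset.sum_congr rfl fun j _ => by ring
  rw [this]
  unfold quadForm hess
  refine Finset.sum_congr rfl fun i _ => Finset.sum_congr rfl fun j _ => ?_
  rw [Matrix.of_apply, iteratedFDeriv_two_apply]
  simp [mul_assoc, mul_comm]
  ring

/-- If the Hessian of `ψ` is `λ`-comparable on an open convex set `U` to its value at `p`,
then on `U` the Bregman distance is squeezed between the corresponding quadratic forms. -/
theorem stmt6 {d : ℕ} (ψ : EuclideanSpace ℝ (Fin d) → ℝ) (hψ : ContDiff ℝ 2 ψ)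
    (lam : ℝ) (hlam : 1 < lam) (U : Set (EuclideanSpace ℝ (Fin d)))
    (hUopen : IsOpen U) (hUconv : Convex ℝ U) (p : EuclideanSpace ℝ (Fin d))
    (hcmp : ∀ u ∈ U, ∀ v : EuclideanSpace ℝ (Fin d),
      (1 / lam) * quadForm (hess ψ u) v ≤ quadForm (hess ψ p) v ∧
      quadForm (hess ψ p) v ≤ lam * quadForm (hess ψ u) v) :
    ∀ x ∈ U, ∀ y ∈ U,
      (1 / (2 * lam)) * quadForm (hess ψ p) (x - y) ≤ breg ψ x y ∧
      breg ψ x y ≤ (lam / 2) * quadForm (hess ψ p) (x - y) := by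
  intro x hx y hy
  set v := x - y with hv
  set γ : ℝ → EuclideanSpace ℝ (Fin d) := fun t => y + t • v with hγdef
  set g : ℝ → ℝ := fun t => ψ (γ t) with hgdef
  set g1 : ℝ → ℝ := fun t => fderiv ℝ ψ (γ t) v with hg1def
  set g2 : ℝ → ℝ := fun t => fderiv ℝ (fderiv ℝ ψ) (γ t) v v with hg2def
  have hψ1 : ContDiff ℝ 1 (fderiv ℝ ψ) := by
    have := hψ.fderiv_right (m := 1) (by norm_num)
    exact this
  have hγ : ∀ t : ℝ, HasDerivAt γ v t := by
    intro t
    have h := ((hasDerivAt_id t).smul_const v).const_add y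
    simp only [one_smul] at h
    exact h
  have hg : ∀ t : ℝ, HasDerivAt g (g1 t) t := by
    intro t
    exact (hψ.differentiable (by norm_num) (γ t)).hasFDerivAt.comp_hasDerivAt t (hγ t)
  have hg1 : ∀ t : ℝ, HasDerivAt g1 (g2 t) t := by
    intro t
    have hB : HasFDerivAt (fderiv ℝ ψ) (fderiv ℝ (fderiv ℝ ψ) (γ t)) (γ t) :=
      (hψ1.differentiable (by norm_num) (γ t)).hasFDerivAt
    have := (hB.clm_apply (hasFDerivAt_const v (γ t))).comp_hasDerivAt t (hγ t)
    simp at this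
    exact this
  -- apply Taylor's theorem with Lagrange remainder, n = 1
  set s : Set ℝ := Set.Icc (0:ℝ) 1 with hsdef
  have huniq : UniqueDiffOn ℝ s := uniqueDiffOn_Icc (by norm_num)
  have h1eq : ∀ t ∈ s, iteratedDerivWithin 1 g s t = g1 t := by
    intro t ht
    rw [iteratedDerivWithin_one]
    exact ((hg t).hasDerivWithinAt.derivWithin (huniq t ht))
  have hf : ContDiffOn ℝ 1 g s := by
    have : ContDiff ℝ 1 g := by
      refine (hψ.of_le (by norm_num)).comp ?_
      exact contDiff_const.add (contDiff_id.smul contDiff_const)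
    exact this.contDiffOn
  have hf' : DifferentiableOn ℝ (iteratedDerivWithin 1 g s) (Set.Ioo 0 1) := by
    have hd : DifferentiableOn ℝ g1 (Set.Ioo 0 1) :=
      fun t _ => (hg1 t).differentiableAt.differentiableWithinAt
    exact hd.congr fun t ht => h1eq t (Set.Ioo_subset_Icc_self ht)
  obtain ⟨ξ, hξ, hT⟩ := taylor_mean_remainder_lagrange (f := g) (x₀ := 0) (x := 1) (n := 1)
    (by norm_num) (by rw [Set.uIcc_of_le zero_le_one]; exact hf)
    (by rw [Set.uIcc_of_le zero_le_one, Set.uIoo_of_le zero_le_one]; exact hf')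
  rw [Set.uIoo_of_le zero_le_one] at hξ
  rw [Set.uIcc_of_le zero_le_one, ← hsdef] at hT
  have hξs : ξ ∈ s := Set.Ioo_subset_Icc_self hξ
  -- compute the second iterated derivative at ξ
  have h2eq : iteratedDerivWithin 2 g s ξ = g2 ξ := by
    rw [show (2:ℕ) = 1 + 1 from rfl, iteratedDerivWithin_succ]
    have : derivWithin (iteratedDerivWithin 1 g s) s ξ = derivWithin g1 s ξ := by
      apply derivWithin_congr h1eq (h1eq ξ hξs)
    rw [this]
    exact (hg1 ξ).hasDerivWithinAt.derivWithin (huniq ξ hξs)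
  -- compute the Taylor polynomial
  have hTP : taylorWithinEval g 1 s 0 1 = g 0 + g1 0 := by
    rw [taylor_within_apply]
    have h0 : iteratedDerivWithin 0 g s 0 = g 0 := by simp
    have h1 : iteratedDerivWithin 1 g s 0 = g1 0 := h1eq 0 (by simp [hsdef])
    rw [Finset.sum_range_succ, Finset.sum_range_succ, Finset.sum_range_zero, h0, h1]
    norm_num
  have hbreg : breg ψ x y = g 1 - g 0 - g1 0 := by
    have hγ0 : γ 0 = y := by simp [hγdef]
    have hγ1 : γ 1 = x := by simp [hγdef, hv]
    have hinner : inner ℝ (gradient ψ y) v = fderiv ℝ ψ y v := by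
      unfold gradient
      exact InnerProductSpace.toDual_symm_apply
    simp only [hgdef, hg1def, hγ0, hγ1, breg, ← hv, hinner]
  have hmain : breg ψ x y = g2 ξ / 2 := by
    rw [hbreg]
    have := hT
    rw [hTP, h2eq] at this
    norm_num at this ⊢
    linarith
  -- comparability at the intermediate point
  have hu : γ ξ ∈ U := by
    have : γ ξ = (1 - ξ) • y + ξ • x := by
      simp only [hγdef, hv]
      module
    rw [this]
    exact hUconv hy hx (by linarith [hξ.2]) (le_of_lt hξ.1) (by ring)
  have hq : g2 ξ = quadForm (hess ψ (γ ξ)) v := by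
    rw [quadForm_hess_eq]
  obtain ⟨hc1, hc2⟩ := hcmp (γ ξ) hu v
  have hlam0 : 0 < lam := by linarith
  have hlne : lam ≠ 0 := ne_of_gt hlam0
  constructor
  · rw [hmain, hq]
    calc (1 / (2 * lam)) * quadForm (hess ψ p) v
        ≤ (1 / (2 * lam)) * (lam * quadForm (hess ψ (γ ξ)) v) :=
          mul_le_mul_of_nonneg_left hc2 (by positivity)
      _ = quadForm (hess ψ (γ ξ)) v / 2 := by field_simp
  · rw [hmain, hq]
    calc quadForm (hess ψ (γ ξ)) v / 2
        = (lam / 2) * ((1 / lam) * quadForm (hess ψ (γ ξ)) v) := by field_simp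
      _ ≤ (lam / 2) * quadForm (hess ψ p) v :=
          mul_le_mul_of_nonneg_left hc1 (by positivity)
end

section
/- Let X ⊂ ℝ^d be a compact convex set with nonempty interior and let ψ be a C² function on an open set containing X whose Hessian ψ″(x) is positive definite for every x ∈ X. Then there exists M > 0 such that for all x, y ∈ X, the Bregman distance and the Riemannian distance satisfy D_ψ(x;y) ≤ M · γ(x,y). -/
set_option maxHeartbeats 1000000

/-- The Riemannian distance on `X` associated to the Hessian metric of `ψ`. -/
noncomputable def riemDist {d : ℕ} (X : Set (EuclideanSpace ℝ (Fin d)))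
    (ψ : EuclideanSpace ℝ (Fin d) → ℝ) (x y : EuclideanSpace ℝ (Fin d)) : ℝ :=
  sInf {L : ℝ | ∃ u : ℝ → EuclideanSpace ℝ (Fin d), ContDiff ℝ 1 u ∧
    (∀ t ∈ Set.Icc (0 : ℝ) 1, u t ∈ X) ∧ u 0 = x ∧ u 1 = y ∧
    L = ∫ t in (0:ℝ)..1, Real.sqrt (quadForm (hess ψ (u t)) (deriv u t))}

lemma quadForm_eq_dot {d : ℕ} (M : Matrix (Fin d) (Fin d) ℝ) (v : EuclideanSpace ℝ (Fin d)) :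
    quadForm M v = dotProduct (v : Fin d → ℝ) (M.mulVec v) := by
  simp [quadForm, dotProduct, Matrix.mulVec, Finset.mul_sum, mul_assoc]

lemma quadForm_smul {d : ℕ} (M : Matrix (Fin d) (Fin d) ℝ) (c : ℝ)
    (v : EuclideanSpace ℝ (Fin d)) : quadForm M (c • v) = c^2 * quadForm M v := by
  simp only [quadForm, PiLp.smul_apply, smul_eq_mul, Finset.mul_sum]
  congr 1; ext i; congr 1; ext j; ring

lemma quadForm_pos {d : ℕ} {M : Matrix (Fin d) (Fin d) ℝ} (hM : M.PosDef)
    {v : EuclideanSpace ℝ (Fin d)} (hv : v ≠ 0) : 0 < quadForm M v := by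
  rw [quadForm_eq_dot]
  have hv' : (v : Fin d → ℝ) ≠ 0 := by
    intro h; apply hv; ext i; exact congrFun h i
  simpa using hM.dotProduct_mulVec_pos hv'

lemma hess_cont {d : ℕ} {ψ : EuclideanSpace ℝ (Fin d) → ℝ} {V : Set (EuclideanSpace ℝ (Fin d))}
    (hV : IsOpen V) (hψ : ContDiffOn ℝ 2 ψ V) (i j : Fin d) :
    ContinuousOn (fun x => hess ψ x i j) V := by
  have h1 : ContinuousOn (iteratedFDerivWithin ℝ 2 ψ V) V :=
    hψ.continuousOn_iteratedFDerivWithin le_rfl hV.uniqueDiffOn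
  have h2 : ContinuousOn (iteratedFDeriv ℝ 2 ψ) V :=
    h1.congr (iteratedFDerivWithin_of_isOpen 2 hV).symm
  exact (continuous_eval_const _).comp_continuousOn h2

lemma norm_grad {d : ℕ} (ψ : EuclideanSpace ℝ (Fin d) → ℝ) (y : EuclideanSpace ℝ (Fin d)) :
    ‖gradient ψ y‖ = ‖fderiv ℝ ψ y‖ := by
  rw [gradient]; exact LinearIsometryEquiv.norm_map _ _

lemma exists_lam {d : ℕ} {X V : Set (EuclideanSpace ℝ (Fin d))}
    {ψ : EuclideanSpace ℝ (Fin d) → ℝ}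
    (hXne : X.Nonempty) (hXcomp : IsCompact X) (hXV : X ⊆ V)
    (hV : IsOpen V) (hψ : ContDiffOn ℝ 2 ψ V)
    (hpos : ∀ x ∈ X, (hess ψ x).PosDef) :
    ∃ lam : ℝ, 0 < lam ∧ ∀ x ∈ X, ∀ v : EuclideanSpace ℝ (Fin d),
      lam * ‖v‖^2 ≤ quadForm (hess ψ x) v := by
  classical
  have hQcont : ContinuousOn
      (fun p : EuclideanSpace ℝ (Fin d) × EuclideanSpace ℝ (Fin d) =>
        quadForm (hess ψ p.1) p.2) (V ×ˢ (Set.univ)) := by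
    unfold quadForm
    apply continuousOn_finset_sum
    intro i _
    apply continuousOn_finset_sum
    intro j _
    have h1 : ContinuousOn (fun p : EuclideanSpace ℝ (Fin d) × EuclideanSpace ℝ (Fin d) =>
        hess ψ p.1 i j) (V ×ˢ (Set.univ)) :=
      (hess_cont hV hψ i j).comp continuousOn_fst (fun p hp => hp.1)
    have h2 : Continuous (fun p : EuclideanSpace ℝ (Fin d) × EuclideanSpace ℝ (Fin d) =>
        p.2 i) := (EuclideanSpace.proj (𝕜 := ℝ) i).continuous.comp continuous_snd
    have h3 : Continuous (fun p : EuclideanSpace ℝ (Fin d) × EuclideanSpace ℝ (Fin d) =>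
        p.2 j) := (EuclideanSpace.proj (𝕜 := ℝ) j).continuous.comp continuous_snd
    exact (h2.continuousOn.mul h1).mul h3.continuousOn
  by_cases hd : ∃ v : EuclideanSpace ℝ (Fin d), v ≠ 0
  · obtain ⟨v₀, hv₀⟩ := hd
    have hsph : IsCompact (Metric.sphere (0 : EuclideanSpace ℝ (Fin d)) 1) :=
      isCompact_sphere 0 1
    have hK : IsCompact (X ×ˢ Metric.sphere (0 : EuclideanSpace ℝ (Fin d)) 1) :=
      hXcomp.prod hsph
    have hKne : (X ×ˢ Metric.sphere (0 : EuclideanSpace ℝ (Fin d)) 1).Nonempty := by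
      rcases hXne with ⟨x₀, hx₀⟩
      exact ⟨(x₀, ‖v₀‖⁻¹ • v₀), hx₀, by
        simp [norm_smul, norm_inv, inv_mul_cancel₀ (norm_ne_zero_iff.mpr hv₀)]⟩
    have hsub : (X ×ˢ Metric.sphere (0 : EuclideanSpace ℝ (Fin d)) 1) ⊆ V ×ˢ Set.univ := by
      rintro ⟨a, b⟩ ⟨ha, _⟩; exact ⟨hXV ha, trivial⟩
    obtain ⟨p₀, hp₀, hmin⟩ := hK.exists_isMinOn hKne (hQcont.mono hsub)
    have hlam : 0 < quadForm (hess ψ p₀.1) p₀.2 := by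
      apply quadForm_pos (hpos _ hp₀.1)
      have := hp₀.2
      simp only [Metric.mem_sphere, dist_zero_right] at this
      intro h; rw [h] at this; simp at this
    refine ⟨quadForm (hess ψ p₀.1) p₀.2, hlam, fun x hx v => ?_⟩
    by_cases hv : v = 0
    · simp [hv, quadForm]
    · have hn : (0:ℝ) < ‖v‖ := norm_pos_iff.mpr hv
      have hmem : (x, ‖v‖⁻¹ • v) ∈ X ×ˢ Metric.sphere (0 : EuclideanSpace ℝ (Fin d)) 1 :=
        ⟨hx, by simp [norm_smul, inv_mul_cancel₀ hn.ne']⟩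
      have h2 : quadForm (hess ψ x) (‖v‖⁻¹ • v) = ‖v‖⁻¹^2 * quadForm (hess ψ x) v :=
        quadForm_smul _ _ _
      rw [isMinOn_iff] at hmin
      have h3 := hmin _ hmem
      rw [h2] at h3
      have h4 : quadForm (hess ψ p₀.1) p₀.2 * ‖v‖^2 ≤ quadForm (hess ψ x) v := by
        rw [inv_pow] at h3
        have h5 := mul_le_mul_of_nonneg_right h3 (le_of_lt (by positivity : (0:ℝ) < ‖v‖^2))
        rwa [mul_comm ((‖v‖^2)⁻¹) _, mul_assoc,
          inv_mul_cancel₀ (by positivity : (‖v‖:ℝ)^2 ≠ 0), mul_one] at h5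
      linarith [h4]
  · push_neg at hd
    refine ⟨1, one_pos, fun x hx v => ?_⟩
    have : v = 0 := hd v
    simp [this, quadForm]

lemma exists_G {d : ℕ} {X V : Set (EuclideanSpace ℝ (Fin d))}
    {ψ : EuclideanSpace ℝ (Fin d) → ℝ}
    (hXcomp : IsCompact X) (hXconv : Convex ℝ X) (hXV : X ⊆ V) (hV : IsOpen V)
    (hψ : ContDiffOn ℝ 2 ψ V) :
    ∃ G : ℝ, 0 ≤ G ∧ ∀ x ∈ X, ∀ y ∈ X, breg ψ x y ≤ G * ‖x - y‖ := by
  have hfd : ContinuousOn (fderiv ℝ ψ) V :=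
    hψ.continuousOn_fderiv_of_isOpen hV (by norm_num)
  obtain ⟨C, hC⟩ := hXcomp.exists_bound_of_continuousOn (hfd.mono hXV)
  set G := max C 0 with hG
  have hG0 : 0 ≤ G := le_max_right _ _
  have hCG : ∀ x ∈ X, ‖fderiv ℝ ψ x‖ ≤ G := fun x hx =>
    le_trans (hC x hx) (le_max_left _ _)
  refine ⟨2 * G, by linarith, fun x hx y hy => ?_⟩
  have hdiff : ∀ z ∈ X, DifferentiableAt ℝ ψ z := fun z hz =>
    (hψ.differentiableOn (by norm_num)).differentiableAt (hV.mem_nhds (hXV hz))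
  have hmv : ‖ψ x - ψ y‖ ≤ G * ‖x - y‖ :=
    hXconv.norm_image_sub_le_of_norm_fderiv_le hdiff hCG hy hx
  have hip : |(inner ℝ (gradient ψ y) (x - y) : ℝ)| ≤ G * ‖x - y‖ := by
    calc |(inner ℝ (gradient ψ y) (x - y) : ℝ)| ≤ ‖gradient ψ y‖ * ‖x - y‖ :=
          abs_real_inner_le_norm _ _
      _ ≤ G * ‖x - y‖ := by
          apply mul_le_mul_of_nonneg_right _ (norm_nonneg _)
          rw [norm_grad]; exact hCG y hy
  have h1 : ψ x - ψ y ≤ G * ‖x - y‖ := le_trans (le_abs_self _) hmv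
  have h2 : -(inner ℝ (gradient ψ y) (x - y) : ℝ) ≤ G * ‖x - y‖ :=
    le_trans (neg_le_abs _) hip
  simp only [breg]
  linarith

lemma riem_lower {d : ℕ} {X V : Set (EuclideanSpace ℝ (Fin d))}
    {ψ : EuclideanSpace ℝ (Fin d) → ℝ} {lam : ℝ}
    (hXconv : Convex ℝ X) (hXV : X ⊆ V) (hV : IsOpen V) (hψ : ContDiffOn ℝ 2 ψ V)
    (hlam : 0 < lam)
    (hlb : ∀ x ∈ X, ∀ v : EuclideanSpace ℝ (Fin d), lam * ‖v‖^2 ≤ quadForm (hess ψ x) v)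
    {x y : EuclideanSpace ℝ (Fin d)} (hx : x ∈ X) (hy : y ∈ X) :
    Real.sqrt lam * ‖x - y‖ ≤ riemDist X ψ x y := by
  apply le_csInf
  · refine ⟨_, fun t => x + t • (y - x), ?_, ?_, ?_, ?_, rfl⟩
    · exact contDiff_const.add (contDiff_id.smul contDiff_const)
    · intro t ht
      show x + t • (y - x) ∈ X
      have heq : x + t • (y - x) = (1 - t) • x + t • y := by
        simp [smul_sub, sub_smul]; abel
      rw [heq]
      exact hXconv hx hy (by linarith [ht.2]) ht.1 (by ring)
    · simp
    · simp
  · rintro L ⟨u, hu, huX, hu0, hu1, rfl⟩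
    have hdu : Continuous (deriv u) := hu.continuous_deriv le_rfl
    have huc : Continuous u := hu.continuous
    have hQc : ContinuousOn (fun t => quadForm (hess ψ (u t)) (deriv u t))
        (Set.Icc (0:ℝ) 1) := by
      unfold quadForm
      apply continuousOn_finset_sum; intro i _
      apply continuousOn_finset_sum; intro j _
      have hmap : Set.MapsTo u (Set.Icc (0:ℝ) 1) V := fun t ht => hXV (huX t ht)
      have h1 : ContinuousOn (fun t => hess ψ (u t) i j) (Set.Icc (0:ℝ) 1) :=
        (hess_cont hV hψ i j).comp huc.continuousOn hmap
      have h2 : Continuous (fun t => deriv u t i) :=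
        (EuclideanSpace.proj (𝕜 := ℝ) i).continuous.comp hdu
      have h3 : Continuous (fun t => deriv u t j) :=
        (EuclideanSpace.proj (𝕜 := ℝ) j).continuous.comp hdu
      exact (h2.continuousOn.mul h1).mul h3.continuousOn
    have hfc : ContinuousOn (fun t => Real.sqrt (quadForm (hess ψ (u t)) (deriv u t)))
        (Set.Icc (0:ℝ) 1) := Real.continuous_sqrt.comp_continuousOn hQc
    have hfi : IntervalIntegrable
        (fun t => Real.sqrt (quadForm (hess ψ (u t)) (deriv u t)))
        MeasureTheory.volume 0 1 := by
      apply ContinuousOn.intervalIntegrable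
      rwa [Set.uIcc_of_le (by norm_num : (0:ℝ) ≤ 1)]
    have hgc : Continuous (fun t => Real.sqrt lam * ‖deriv u t‖) :=
      continuous_const.mul hdu.norm
    have hgi : IntervalIntegrable (fun t => Real.sqrt lam * ‖deriv u t‖)
        MeasureTheory.volume 0 1 := hgc.intervalIntegrable 0 1
    have hpt : ∀ t ∈ Set.Icc (0:ℝ) 1,
        Real.sqrt lam * ‖deriv u t‖ ≤ Real.sqrt (quadForm (hess ψ (u t)) (deriv u t)) := by
      intro t ht
      have h1 : lam * ‖deriv u t‖^2 ≤ quadForm (hess ψ (u t)) (deriv u t) :=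
        hlb _ (huX t ht) _
      calc Real.sqrt lam * ‖deriv u t‖
          = Real.sqrt (lam * ‖deriv u t‖^2) := by
            rw [Real.sqrt_mul hlam.le, Real.sqrt_sq (norm_nonneg _)]
        _ ≤ _ := Real.sqrt_le_sqrt h1
    have hint : (∫ t in (0:ℝ)..1, Real.sqrt lam * ‖deriv u t‖)
        ≤ ∫ t in (0:ℝ)..1, Real.sqrt (quadForm (hess ψ (u t)) (deriv u t)) :=
      intervalIntegral.integral_mono_on (by norm_num) hgi hfi hpt
    have hftc : (∫ t in (0:ℝ)..1, deriv u t) = u 1 - u 0 := by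
      apply intervalIntegral.integral_deriv_eq_sub
      · intro t _; exact hu.differentiable one_ne_zero |>.differentiableAt
      · exact hdu.intervalIntegrable 0 1
    have hchord : ‖x - y‖ ≤ ∫ t in (0:ℝ)..1, ‖deriv u t‖ := by
      have := intervalIntegral.norm_integral_le_integral_norm
        (f := deriv u) (a := (0:ℝ)) (b := 1) (μ := MeasureTheory.volume) (by norm_num)
      rw [hftc, hu0, hu1] at this
      rwa [norm_sub_rev]
    have h2 : (∫ t in (0:ℝ)..1, Real.sqrt lam * ‖deriv u t‖)
        = Real.sqrt lam * ∫ t in (0:ℝ)..1, ‖deriv u t‖ :=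
      intervalIntegral.integral_const_mul _ _
    have h3 : Real.sqrt lam * ‖x - y‖ ≤ Real.sqrt lam * ∫ t in (0:ℝ)..1, ‖deriv u t‖ :=
      mul_le_mul_of_nonneg_left hchord (Real.sqrt_nonneg _)
    linarith [hint, h2 ▸ hint]

/-- On a compact convex set, the Bregman distance is bounded by a constant multiple
of the Riemannian distance. -/
theorem stmt7 {d : ℕ} (X : Set (EuclideanSpace ℝ (Fin d)))
    (hXcomp : IsCompact X) (hXconv : Convex ℝ X) (hXint : (interior X).Nonempty)
    (ψ : EuclideanSpace ℝ (Fin d) → ℝ)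
    (hC2 : ∃ V : Set (EuclideanSpace ℝ (Fin d)), IsOpen V ∧ X ⊆ V ∧ ContDiffOn ℝ 2 ψ V)
    (hpos : ∀ x ∈ X, (hess ψ x).PosDef) :
    ∃ M : ℝ, 0 < M ∧ ∀ x ∈ X, ∀ y ∈ X, breg ψ x y ≤ M * riemDist X ψ x y := by
  obtain ⟨V, hV, hXV, hψ⟩ := hC2
  have hXne : X.Nonempty := hXint.mono interior_subset
  obtain ⟨lam, hlam, hlb⟩ := exists_lam hXne hXcomp hXV hV hψ hpos
  obtain ⟨G, hG0, hGb⟩ := exists_G hXcomp hXconv hXV hV hψ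
  have hs : 0 < Real.sqrt lam := Real.sqrt_pos.mpr hlam
  refine ⟨(G + 1) / Real.sqrt lam, by positivity, fun x hx y hy => ?_⟩
  have hr : Real.sqrt lam * ‖x - y‖ ≤ riemDist X ψ x y :=
    riem_lower hXconv hXV hV hψ hlam hlb hx hy
  have h1 : breg ψ x y ≤ G * ‖x - y‖ := hGb x hx y hy
  have h2 : (G + 1) / Real.sqrt lam * riemDist X ψ x y
      ≥ (G + 1) / Real.sqrt lam * (Real.sqrt lam * ‖x - y‖) :=
    mul_le_mul_of_nonneg_left hr (by positivity)
  have h3 : (G + 1) / Real.sqrt lam * (Real.sqrt lam * ‖x - y‖) = (G + 1) * ‖x - y‖ := by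
    field_simp
  nlinarith [norm_nonneg (x - y)]
end
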